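/- Let X be a perfect Hausdorff uniform space. Then the set of uniform averages δ_F := (1/|F|)∑_{x∈F} δ_x over finite nonempty subsets F ⊆ X is dense, with respect to the UEB topology, in the set of finitely supported functions a : X → ℝ with a ≥ 0 and ∑_x a(x) = 1. -/

import Mathlib

/-- A pseudo-metric. -/
structure IsPseudoMetric {X : Type*} (d : X → X → ℝ) : Prop where
  refl : ∀ x, d x x = 0
  symm : ∀ x y, d x y = d y x
  triangle : ∀ x y z, d x z ≤ d x y + d y z

/-- A uniformly continuous pseudo-metric on a uniform space. -/
def IsUCPseudoMetric {X : Type*} [UniformSpace X] (d : X → X → ℝ) : Prop :=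
  IsPseudoMetric d ∧ UniformContinuous (fun p : X × X => d p.1 p.2)

/-- The semi-norm `p_d` on finitely supported functions. -/
noncomputable def pSemi {X : Type*} (d : X → X → ℝ) (a : X →₀ ℝ) : ℝ :=
  ⨆ f : {f : X → ℝ // (∀ x y, |f x - f y| ≤ d x y) ∧ ∀ x, |f x| ≤ 1},
    |a.sum fun x c => c * f.1 x|

/-- The UEB topology on `ℝX`. -/
noncomputable def uebTopology (X : Type*) [UniformSpace X] : TopologicalSpace (X →₀ ℝ) :=
  TopologicalSpace.generateFrom
    {s | ∃ (a : X →₀ ℝ) (d : X → X → ℝ) (ε : ℝ), IsUCPseudoMetric d ∧ 0 < ε ∧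
      s = {b : X →₀ ℝ | pSemi d (b - a) < ε}}

lemma IsPseudoMetric.nonneg' {X : Type*} {d : X → X → ℝ} (hd : IsPseudoMetric d) (x y : X) :
    0 ≤ d x y := by
  linarith [hd.refl x, hd.triangle x y x, hd.symm y x]

namespace StmtAux

variable {X : Type*}

lemma sum_eq_LC (f : X → ℝ) (a : X →₀ ℝ) :
    (a.sum fun x c => c * f x) = Finsupp.linearCombination ℝ f a := by
  rw [Finsupp.linearCombination_apply]
  simp [smul_eq_mul]

lemma abs_LC_le {f : X → ℝ} (hf : ∀ x, |f x| ≤ 1) (a : X →₀ ℝ) :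
    |Finsupp.linearCombination ℝ f a| ≤ ∑ x ∈ a.support, |a x| := by
  rw [Finsupp.linearCombination_apply, Finsupp.sum]
  refine (Finset.abs_sum_le_sum_abs _ _).trans (Finset.sum_le_sum fun x _ => ?_)
  rw [smul_eq_mul, abs_mul]
  exact mul_le_of_le_one_right (abs_nonneg _) (hf x)

lemma pSemi_bdd (d : X → X → ℝ) (a : X →₀ ℝ) :
    BddAbove (Set.range fun f : {f : X → ℝ // (∀ x y, |f x - f y| ≤ d x y) ∧ ∀ x, |f x| ≤ 1} =>
      |a.sum fun x c => c * f.1 x|) := by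
  refine ⟨∑ x ∈ a.support, |a x|, ?_⟩
  rintro r ⟨f, rfl⟩
  dsimp only
  rw [sum_eq_LC]
  exact abs_LC_le f.2.2 a

lemma le_pSemi (d : X → X → ℝ) (a : X →₀ ℝ)
    (f : {f : X → ℝ // (∀ x y, |f x - f y| ≤ d x y) ∧ ∀ x, |f x| ≤ 1}) :
    |a.sum fun x c => c * f.1 x| ≤ pSemi d a :=
  le_ciSup (pSemi_bdd d a) f

lemma pSemi_le {d : X → X → ℝ} (hd : ∀ x y, 0 ≤ d x y) {a : X →₀ ℝ} {C : ℝ}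
    (h : ∀ f : {f : X → ℝ // (∀ x y, |f x - f y| ≤ d x y) ∧ ∀ x, |f x| ≤ 1},
      |a.sum fun x c => c * f.1 x| ≤ C) : pSemi d a ≤ C := by
  have : Nonempty {f : X → ℝ // (∀ x y, |f x - f y| ≤ d x y) ∧ ∀ x, |f x| ≤ 1} :=
    ⟨⟨0, fun x y => by simpa using hd x y, fun x => by simp⟩⟩
  exact ciSup_le h

lemma pSemi_triangle {d : X → X → ℝ} (hd : ∀ x y, 0 ≤ d x y) (u v w : X →₀ ℝ) :
    pSemi d (u - w) ≤ pSemi d (u - v) + pSemi d (v - w) := by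
  refine pSemi_le hd fun f => ?_
  have h1 := le_pSemi d (u - v) f
  have h2 := le_pSemi d (v - w) f
  rw [sum_eq_LC] at h1 h2 ⊢
  have huw : u - w = (u - v) + (v - w) := by abel
  rw [huw, map_add]
  exact (abs_add_le _ _).trans (by linarith)

lemma pSemi_mono {d D : X → X → ℝ} (hd : ∀ x y, 0 ≤ d x y) (h : ∀ x y, d x y ≤ D x y)
    (a : X →₀ ℝ) : pSemi d a ≤ pSemi D a := by
  refine pSemi_le hd fun f => ?_
  exact le_pSemi D a ⟨f.1, fun x y => (f.2.1 x y).trans (h x y), f.2.2⟩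

lemma exists_disjoint_finsets (S : Finset X) (U : X → Set X) (k : X → ℕ) :
    (∀ x ∈ S, (U x).Infinite) →
    ∃ G : X → Finset X, (∀ x ∈ S, ↑(G x) ⊆ U x ∧ (G x).card = k x) ∧
      ∀ x ∈ S, ∀ y ∈ S, x ≠ y → Disjoint (G x) (G y) := by
  classical
  induction S using Finset.induction_on with
  | empty => intro _; exact ⟨fun _ => ∅, by simp, by simp⟩
  | @insert x S hx ih =>
    intro hU
    obtain ⟨G, hG1, hG2⟩ := ih fun y hy => hU y (Finset.mem_insert_of_mem hy)
    have hinf : (U x \ ↑(S.biUnion G)).Infinite :=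
      (hU x (Finset.mem_insert_self x S)).diff (Finset.finite_toSet _)
    obtain ⟨F, hFsub, hFcard⟩ := hinf.exists_subset_card_eq (k x)
    refine ⟨fun y => if y = x then F else G y, ?_, ?_⟩
    · intro y hy
      rcases Finset.mem_insert.mp hy with rfl | hy
      · simp only [if_pos rfl]
        exact ⟨fun z hz => (hFsub hz).1, hFcard⟩
      · have hyx : y ≠ x := fun h => hx (h ▸ hy)
        simp only [if_neg hyx]
        exact hG1 y hy
    · intro y hy z hz hyz
      have hdisjF : ∀ w ∈ S, Disjoint F (G w) := by
        intro w hw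
        rw [Finset.disjoint_left]
        intro u hu huG
        exact (hFsub hu).2 (Finset.mem_coe.mpr (Finset.mem_biUnion.mpr ⟨w, hw, huG⟩))
      rcases Finset.mem_insert.mp hy with rfl | hy'
      · rcases Finset.mem_insert.mp hz with rfl | hz'
        · exact absurd rfl hyz
        · have hzx : z ≠ y := fun h => hx (h ▸ hz')
          simp only [if_pos rfl, if_neg hzx]
          exact hdisjF z hz'
      · rcases Finset.mem_insert.mp hz with rfl | hz'
        · have hyx : y ≠ z := fun h => hx (h ▸ hy')
          simp only [if_pos rfl, if_neg hyx]
          exact (hdisjF y hy').symm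
        · have hyx : y ≠ x := fun h => hx (h ▸ hy')
          have hzx : z ≠ x := fun h => hx (h ▸ hz')
          simp only [if_neg hyx, if_neg hzx]
          exact hG2 y hy' z hz' hyz

lemma key {D : X → X → ℝ} (hD : IsPseudoMetric D)
    (hball : ∀ x : X, ∀ η : ℝ, 0 < η → {y | D x y < η}.Infinite)
    (a : X →₀ ℝ) (ha0 : ∀ x, 0 ≤ a x) (ha1 : a.sum (fun _ c => c) = 1)
    {ε : ℝ} (hε : 0 < ε) :
    ∃ F : Finset X, F.Nonempty ∧
      pSemi D ((F.card : ℝ)⁻¹ • ∑ x ∈ F, Finsupp.single x 1 - a) < ε := by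
  classical
  set S := a.support with hSdef
  have h_asum : ∑ x ∈ S, a x = 1 := ha1
  have hS : S.Nonempty := by
    rcases S.eq_empty_or_nonempty with h | h
    · rw [h] at h_asum; simp at h_asum
    · exact h
  set m := S.card with hmdef
  have hm1 : 1 ≤ m := Finset.card_pos.mpr hS
  obtain ⟨N, hN⟩ := exists_nat_gt (4 * m / ε)
  have hNR0 : (0 : ℝ) < N := by
    refine lt_of_le_of_lt ?_ hN
    positivity
  have hN0 : 0 < N := by exact_mod_cast hNR0
  have hN4 : 4 * (m : ℝ) < N * ε := by
    rw [div_lt_iff₀ hε] at hN; linarith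
  have hNe : 2 * (m : ℝ) / N < ε / 2 := by
    rw [div_lt_div_iff₀ hNR0 two_pos]; linarith
  obtain ⟨x₀, hx₀⟩ := hS
  set k : X → ℕ := fun x =>
    if x = x₀ then N - ∑ y ∈ S.erase x₀, ⌊(N : ℝ) * a y⌋₊ else ⌊(N : ℝ) * a x⌋₊ with hkdef
  set s₁ : ℕ := ∑ y ∈ S.erase x₀, ⌊(N : ℝ) * a y⌋₊ with hs₁def
  have h_erase_sum : ∑ y ∈ S.erase x₀, a y = 1 - a x₀ := by
    have := Finset.add_sum_erase S a hx₀
    linarith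
  have hs₁le : (s₁ : ℝ) ≤ N * (1 - a x₀) := by
    rw [hs₁def]
    push_cast
    calc ∑ y ∈ S.erase x₀, (⌊(N : ℝ) * a y⌋₊ : ℝ)
        ≤ ∑ y ∈ S.erase x₀, (N : ℝ) * a y :=
          Finset.sum_le_sum fun y _ => Nat.floor_le (mul_nonneg hNR0.le (ha0 _))
      _ = N * (1 - a x₀) := by rw [← Finset.mul_sum, h_erase_sum]
  have hs₁N : s₁ ≤ N := by
    have : (s₁ : ℝ) ≤ N := by nlinarith [ha0 x₀]
    exact_mod_cast this
  have hk_erase : ∀ y ∈ S.erase x₀, k y = ⌊(N : ℝ) * a y⌋₊ := by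
    intro y hy
    rw [hkdef]
    simp only [if_neg (Finset.ne_of_mem_erase hy)]
  have hk_sum : ∑ x ∈ S, k x = N := by
    rw [← Finset.add_sum_erase S k hx₀]
    rw [Finset.sum_congr rfl hk_erase]
    simp only [hkdef, if_pos rfl, ← hs₁def]
    exact Nat.sub_add_cancel hs₁N
  -- error bounds
  have hk1 : ∀ x ∈ S.erase x₀, |(k x : ℝ) / N - a x| ≤ 1 / N := by
    intro x hxm
    rw [hk_erase x hxm]
    have h1 : (⌊(N : ℝ) * a x⌋₊ : ℝ) ≤ N * a x := Nat.floor_le (mul_nonneg hNR0.le (ha0 _))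
    have h2 : (N : ℝ) * a x < ⌊(N : ℝ) * a x⌋₊ + 1 := Nat.lt_floor_add_one _
    have e1 : (⌊(N : ℝ) * a x⌋₊ : ℝ) / N ≤ a x := by
      rw [div_le_iff₀ hNR0]; linarith
    have e2 : a x ≤ ((⌊(N : ℝ) * a x⌋₊ : ℝ) + 1) / N := by
      rw [le_div_iff₀ hNR0]; linarith
    have e3 : ((⌊(N : ℝ) * a x⌋₊ : ℝ) + 1) / N = (⌊(N : ℝ) * a x⌋₊ : ℝ) / N + 1 / N :=
      add_div _ _ _
    rw [e3] at e2
    rw [abs_le]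
    constructor <;> linarith
  have hk0 : |(k x₀ : ℝ) / N - a x₀| ≤ m / N := by
    have hkx₀ : (k x₀ : ℝ) = (N : ℝ) - (s₁ : ℝ) := by
      have hkk : k x₀ = N - s₁ := by simp only [hkdef, if_pos rfl]
      rw [hkk, Nat.cast_sub hs₁N]
    have hTle : (N : ℝ) * (1 - a x₀) - s₁ ≤ m := by
      have heqT : (N : ℝ) * (1 - a x₀) - s₁
          = ∑ y ∈ S.erase x₀, ((N : ℝ) * a y - ⌊(N : ℝ) * a y⌋₊) := by
        rw [Finset.sum_sub_distrib, ← Finset.mul_sum, h_erase_sum, hs₁def]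
        push_cast
        ring
      rw [heqT]
      calc ∑ y ∈ S.erase x₀, ((N : ℝ) * a y - ⌊(N : ℝ) * a y⌋₊)
          ≤ ∑ _y ∈ S.erase x₀, (1 : ℝ) := by
            refine Finset.sum_le_sum fun y _ => ?_
            have := Nat.lt_floor_add_one ((N : ℝ) * a y)
            linarith
        _ = (S.erase x₀).card := by simp
        _ ≤ m := by
            exact_mod_cast Finset.card_le_card (Finset.erase_subset _ _)
    have hT0 : 0 ≤ (N : ℝ) * (1 - a x₀) - s₁ := by linarith
    have heq : (k x₀ : ℝ) / N - a x₀ = ((N : ℝ) * (1 - a x₀) - s₁) / N := by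
      rw [hkx₀]
      field_simp
      ring
    rw [heq, abs_of_nonneg (div_nonneg hT0 hNR0.le)]
    gcongr
  have hE : ∑ x ∈ S, |(k x : ℝ) / N - a x| ≤ 2 * m / N := by
    rw [← Finset.add_sum_erase S _ hx₀]
    have h1 : ∑ x ∈ S.erase x₀, |(k x : ℝ) / N - a x| ≤ m / N := by
      calc ∑ x ∈ S.erase x₀, |(k x : ℝ) / N - a x|
          ≤ ∑ _x ∈ S.erase x₀, (1 : ℝ) / (N : ℝ) := Finset.sum_le_sum hk1
        _ = ((S.erase x₀).card : ℝ) / (N : ℝ) := by rw [Finset.sum_const]; push_cast; ring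
        _ ≤ m / N := by
            gcongr
            exact_mod_cast Finset.card_le_card (Finset.erase_subset _ _)
    have h2 : 2 * (m : ℝ) / N = m / N + m / N := by ring
    rw [h2]
    exact add_le_add hk0 h1
  -- choose the points
  set η := ε / 4 with hηdef
  have hη : 0 < η := by positivity
  obtain ⟨G, hG1, hG2⟩ := exists_disjoint_finsets S (fun x => {y | D x y < η}) k
    (fun x _ => hball x η hη)
  set F := S.biUnion G with hFdef
  have hFcard : F.card = N := by
    rw [hFdef, Finset.card_biUnion hG2]
    rw [Finset.sum_congr rfl fun x hxm => (hG1 x hxm).2]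
    exact hk_sum
  have hFne : F.Nonempty := Finset.card_pos.mp (hFcard ▸ hN0)
  refine ⟨F, hFne, ?_⟩
  have hbound : pSemi D ((F.card : ℝ)⁻¹ • ∑ x ∈ F, Finsupp.single x 1 - a)
      ≤ η + 2 * m / N := by
    refine pSemi_le hD.nonneg' fun f => ?_
    obtain ⟨f, hf1, hf2⟩ := f
    rw [sum_eq_LC]
    rw [map_sub, map_smul, map_sum]
    simp only [Finsupp.linearCombination_single, one_smul, smul_eq_mul, one_mul]
    rw [Finsupp.linearCombination_apply, Finsupp.sum]
    have hbi : ∑ y ∈ F, f y = ∑ x ∈ S, ∑ y ∈ G x, f y := by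
      rw [hFdef]
      exact Finset.sum_biUnion fun x hxm y hym hxy => hG2 x hxm y hym hxy
    rw [hFcard, hbi, ← hSdef]
    have hterm : (N : ℝ)⁻¹ * (∑ x ∈ S, ∑ y ∈ G x, f y) - ∑ x ∈ S, a x • f x
        = ∑ x ∈ S, ((N : ℝ)⁻¹ * ∑ y ∈ G x, (f y - f x) + ((k x : ℝ) / N - a x) * f x) := by
      rw [Finset.mul_sum, ← Finset.sum_sub_distrib]
      refine Finset.sum_congr rfl fun x hxm => ?_
      rw [Finset.sum_sub_distrib, Finset.sum_const, (hG1 x hxm).2]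
      simp only [smul_eq_mul, nsmul_eq_mul]
      field_simp
      ring
    rw [hterm]
    calc |∑ x ∈ S, ((N : ℝ)⁻¹ * ∑ y ∈ G x, (f y - f x) + ((k x : ℝ) / N - a x) * f x)|
        ≤ ∑ x ∈ S, |(N : ℝ)⁻¹ * ∑ y ∈ G x, (f y - f x) + ((k x : ℝ) / N - a x) * f x| :=
          Finset.abs_sum_le_sum_abs _ _
      _ ≤ ∑ x ∈ S, ((N : ℝ)⁻¹ * (k x * η) + |(k x : ℝ) / N - a x|) := by
          refine Finset.sum_le_sum fun x hxm => ?_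
          refine (abs_add_le _ _).trans (add_le_add ?_ ?_)
          · rw [abs_mul, abs_of_nonneg (by positivity : (0:ℝ) ≤ (N:ℝ)⁻¹)]
            refine mul_le_mul_of_nonneg_left ?_ (by positivity)
            calc |∑ y ∈ G x, (f y - f x)| ≤ ∑ y ∈ G x, |f y - f x| :=
                  Finset.abs_sum_le_sum_abs _ _
              _ ≤ ∑ _y ∈ G x, η := by
                  refine Finset.sum_le_sum fun y hym => ?_
                  have hDxy : D x y < η := (hG1 x hxm).1 hym
                  have := hf1 y x
                  rw [hD.symm y x] at this
                  linarith
              _ = (G x).card * η := by rw [Finset.sum_const]; push_cast; ring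
              _ = k x * η := by rw [(hG1 x hxm).2]
          · rw [abs_mul]
            exact mul_le_of_le_one_right (abs_nonneg _) (hf2 x)
      _ = (N : ℝ)⁻¹ * η * (∑ x ∈ S, (k x : ℝ)) + ∑ x ∈ S, |(k x : ℝ) / N - a x| := by
          rw [Finset.sum_add_distrib, Finset.mul_sum]
          congr 1
          refine Finset.sum_congr rfl fun x _ => ?_
          ring
      _ ≤ (N : ℝ)⁻¹ * η * N + 2 * m / N := by
          have : ∑ x ∈ S, (k x : ℝ) = N := by exact_mod_cast hk_sum
          rw [this]
          exact add_le_add le_rfl hE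
      _ = η + 2 * m / N := by field_simp
  calc pSemi D ((F.card : ℝ)⁻¹ • ∑ x ∈ F, Finsupp.single x 1 - a)
      ≤ η + 2 * m / N := hbound
    _ < ε / 4 + ε / 2 := by rw [hηdef]; linarith
    _ < ε := by linarith

end StmtAux

open StmtAux

/-- In a perfect Hausdorff uniform space `X`, the uniform averages `δ_F` over finite nonempty
subsets are UEB-dense in the positive normalized finitely supported functions. -/
theorem stmt_6 {X : Type*} [UniformSpace X] [T2Space X]
    (hperf : ∀ x : X, ¬ IsOpen ({x} : Set X)) :
    {a : X →₀ ℝ | (∀ x, 0 ≤ a x) ∧ a.sum (fun _ c => c) = 1} ⊆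
      @closure _ (uebTopology X)
        {b : X →₀ ℝ | ∃ F : Finset X, F.Nonempty ∧
          b = (F.card : ℝ)⁻¹ • ∑ x ∈ F, Finsupp.single x 1} := by
  classical
  intro a ha
  obtain ⟨ha0, ha1⟩ := ha
  letI inst := uebTopology X
  have hbasis := TopologicalSpace.isTopologicalBasis_of_subbasis
    (t := inst)
    (s := {s | ∃ (a : X →₀ ℝ) (d : X → X → ℝ) (ε : ℝ), IsUCPseudoMetric d ∧ 0 < ε ∧
      s = {b : X →₀ ℝ | pSemi d (b - a) < ε}}) rfl
  rw [hbasis.mem_closure_iff]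
  rintro o ⟨T, ⟨hTfin, hTsub⟩, rfl⟩ hao
  set Tf := hTfin.toFinset with hTfdef
  have hdata : ∀ t ∈ Tf, ∃ (c : X →₀ ℝ) (d : X → X → ℝ) (δ : ℝ),
      IsUCPseudoMetric d ∧ 0 < δ ∧ t = {b : X →₀ ℝ | pSemi d (b - c) < δ} :=
    fun t ht => hTsub (hTfin.mem_toFinset.mp ht)
  choose c d δ hUC hδ htEq using hdata
  set D : X → X → ℝ := fun x y => ∑ t ∈ Tf.attach, d t.1 t.2 x y with hDdef
  have hDpm : IsPseudoMetric D := by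
    constructor
    · intro x
      exact Finset.sum_eq_zero fun t _ => (hUC t.1 t.2).1.refl x
    · intro x y
      exact Finset.sum_congr rfl fun t _ => (hUC t.1 t.2).1.symm x y
    · intro x y z
      calc ∑ t ∈ Tf.attach, d t.1 t.2 x z
          ≤ ∑ t ∈ Tf.attach, (d t.1 t.2 x y + d t.1 t.2 y z) :=
            Finset.sum_le_sum fun t _ => (hUC t.1 t.2).1.triangle x y z
        _ = D x y + D y z := Finset.sum_add_distrib
  have hdleD : ∀ t (ht : t ∈ Tf) x y, d t ht x y ≤ D x y := by
    intro t ht x y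
    exact Finset.single_le_sum (f := fun s : {s // s ∈ Tf} => d s.1 s.2 x y)
      (fun s _ => (hUC s.1 s.2).1.nonneg' x y) (Finset.mem_attach _ ⟨t, ht⟩)
  have hball : ∀ x : X, ∀ η : ℝ, 0 < η → {y | D x y < η}.Infinite := by
    intro x η hη
    have hcont : Continuous fun y => D x y := by
      refine continuous_finset_sum _ fun t _ => ?_
      exact ((hUC t.1 t.2).2.continuous).comp (continuous_const.prodMk continuous_id)
    have hopen : IsOpen {y | D x y < η} := isOpen_lt hcont continuous_const
    have hxmem : x ∈ {y | D x y < η} := by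
      simp only [Set.mem_setOf_eq, hDpm.refl x]; exact hη
    haveI : Filter.NeBot (nhdsWithin x {x}ᶜ) := by
      constructor
      intro h
      exact hperf x ((isOpen_singleton_iff_punctured_nhds x).mpr h)
    exact infinite_of_mem_nhds x (hopen.mem_nhds hxmem)
  -- the target tolerance
  have haT : ∀ t (ht : t ∈ Tf), pSemi (d t ht) (a - c t ht) < δ t ht := by
    intro t ht
    have : a ∈ t := hao t (hTfin.mem_toFinset.mp ht)
    rw [htEq t ht] at this
    exact this
  set ρs : Finset ℝ :=
    insert (1 : ℝ) (Tf.attach.image fun t => δ t.1 t.2 - pSemi (d t.1 t.2) (a - c t.1 t.2))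
    with hρsdef
  have hρsne : ρs.Nonempty := Finset.insert_nonempty _ _
  set ρ := ρs.min' hρsne with hρdef
  have hρpos : 0 < ρ := by
    rw [hρdef]
    rw [Finset.lt_min'_iff]
    intro r hr
    rw [hρsdef] at hr
    rcases Finset.mem_insert.mp hr with rfl | hr
    · norm_num
    · obtain ⟨t, _, rfl⟩ := Finset.mem_image.mp hr
      have := haT t.1 t.2
      linarith
  obtain ⟨F, hFne, hFlt⟩ := key hDpm hball a ha0 ha1 hρpos
  refine ⟨(F.card : ℝ)⁻¹ • ∑ x ∈ F, Finsupp.single x 1, ?_, ⟨F, hFne, rfl⟩⟩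
  rw [Set.mem_sInter]
  intro t ht
  have htTf : t ∈ Tf := hTfin.mem_toFinset.mpr ht
  rw [htEq t htTf]
  set b : X →₀ ℝ := (F.card : ℝ)⁻¹ • ∑ x ∈ F, (Finsupp.single x 1 : X →₀ ℝ) with hbdef
  show pSemi (d t htTf) (b - c t htTf) < δ t htTf
  have hnn : ∀ x y, 0 ≤ d t htTf x y := (hUC t htTf).1.nonneg'
  have h1 : pSemi (d t htTf) (b - c t htTf)
      ≤ pSemi (d t htTf) (b - a) + pSemi (d t htTf) (a - c t htTf) :=
    pSemi_triangle hnn b a (c t htTf)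
  have h2 : pSemi (d t htTf) (b - a) ≤ pSemi D (b - a) :=
    pSemi_mono hnn (hdleD t htTf) _
  have h3 : ρ ≤ δ t htTf - pSemi (d t htTf) (a - c t htTf) := by
    refine Finset.min'_le _ _ ?_
    rw [hρsdef]
    exact Finset.mem_insert_of_mem (Finset.mem_image.mpr ⟨⟨t, htTf⟩, Finset.mem_attach _ _, rfl⟩)
  linarith
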